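/- Under the hypotheses of the previous stationarity lemma, any stationary point (Ū, V̄) of f(U,V) = (1/2)(‖U‖_F² + ‖V‖_F²) + (μ/2)‖𝓑(UV) − d‖₂² satisfies ‖Ū‖_F² = ‖V̄‖_F². -/

import Mathlib

open Matrix

noncomputable def frobInner {ι κ : Type*} [Fintype ι] [Fintype κ]
    (A B : Matrix ι κ ℝ) : ℝ := (Aᵀ * B).trace

noncomputable def frobNorm {ι κ : Type*} [Fintype ι] [Fintype κ]
    (A : Matrix ι κ ℝ) : ℝ := Real.sqrt (∑ i, ∑ j, (A i j) ^ 2)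

noncomputable def nuclearNorm {m n : ℕ} (X : Matrix (Fin m) (Fin n) ℝ) : ℝ :=
  ∑ i : Fin n, Real.sqrt ((Matrix.isHermitian_conjTranspose_mul_self X).eigenvalues i)

noncomputable def specNorm {m n : ℕ} (X : Matrix (Fin m) (Fin n) ℝ) : ℝ :=
  ⨆ i : Fin n, Real.sqrt ((Matrix.isHermitian_conjTranspose_mul_self X).eigenvalues i)

lemma frobNorm_sq {ι κ : Type*} [Fintype ι] [Fintype κ] (A : Matrix ι κ ℝ) :
    frobNorm A ^ 2 = (Aᵀ * A).trace := by
  rw [frobNorm, Real.sq_sqrt (by positivity)]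
  simp [Matrix.trace, Matrix.mul_apply, Matrix.diag, sq]
  exact Finset.sum_comm

theorem stationary_frobNorm_eq {m n r L : ℕ} (μ : ℝ) (hμ : 0 < μ)
    (B : Matrix (Fin m) (Fin n) ℝ →ₗ[ℝ] (Fin L → ℝ))
    (Bstar : (Fin L → ℝ) →ₗ[ℝ] Matrix (Fin m) (Fin n) ℝ)
    (hadj : ∀ (z : Fin L → ℝ) (A : Matrix (Fin m) (Fin n) ℝ),
      frobInner (Bstar z) A = ∑ i, z i * B A i)
    (d : Fin L → ℝ)
    (U : Matrix (Fin m) (Fin r) ℝ) (V : Matrix (Fin r) (Fin n) ℝ)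
    (hU : (μ • Bstar (B (U * V) - d)) * Vᵀ + U = 0)
    (hV : (μ • Bstar (B (U * V) - d))ᵀ * U + Vᵀ = 0) :
    frobNorm U ^ 2 = frobNorm V ^ 2 := by
  set G : Matrix (Fin m) (Fin n) ℝ := μ • Bstar (B (U * V) - d) with hG
  have hU' : U = -(G * Vᵀ) := eq_neg_of_add_eq_zero_right hU
  have hV' : Vᵀ = -(Gᵀ * U) := eq_neg_of_add_eq_zero_right hV
  rw [frobNorm_sq, frobNorm_sq]
  have h1 : (Uᵀ * U).trace = -(Uᵀ * G * Vᵀ).trace := by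
    nth_rewrite 2 [hU']
    rw [Matrix.mul_neg, Matrix.trace_neg, Matrix.mul_assoc]
  have h2 : (Vᵀ * V).trace = -(Uᵀ * G * Vᵀ).trace := by
    nth_rewrite 1 [hV']
    rw [Matrix.neg_mul, Matrix.trace_neg]
    congr 1
    rw [← Matrix.trace_transpose (Gᵀ * U * V)]
    simp only [Matrix.transpose_mul, Matrix.transpose_transpose, Matrix.mul_assoc]
    rw [Matrix.trace_mul_comm Vᵀ (Uᵀ * G), Matrix.mul_assoc]
  rw [h1, h2]
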